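/- arXiv:2412.04016 — 7 statements merged into one kernel-verified Lean document; each statement's English description precedes it below -/
import Mathlib

section
/- Let G = (V, E) be a finite simple graph and let k be a natural number. There exist two disjoint independent sets A, B ⊆ V with |A| + |B| ≥ k (equivalently, an induced bipartite subgraph of G with at least k vertices) if and only if there exist two assignments α₁, α₂ : V → Bool such that for every edge {u, v} ∈ E and each i ∈ {1, 2} at least one of α_i(u) = true or α_i(v) = true holds, and |{v ∈ V : α₁(v) ≠ α₂(v)}| ≥ k. -/
/-- Induced bipartite subgraph of size ≥ k ↔ two satisfying assignments of the
monotone 2CNF formula φ̄_G (clauses x_u ∨ x_v over edges) at Hamming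
distance ≥ k. -/
theorem induced_bipartite_iff_monotone_diverse_pair
    {V : Type*} [Fintype V] (G : SimpleGraph V) (k : ℕ) :
    (∃ A B : Finset V, Disjoint A B ∧
      (∀ u ∈ A, ∀ v ∈ A, ¬ G.Adj u v) ∧
      (∀ u ∈ B, ∀ v ∈ B, ¬ G.Adj u v) ∧
      k ≤ A.card + B.card) ↔
    (∃ α₁ α₂ : V → Bool,
      (∀ u v : V, G.Adj u v → (α₁ u = true ∨ α₁ v = true)) ∧
      (∀ u v : V, G.Adj u v → (α₂ u = true ∨ α₂ v = true)) ∧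
      k ≤ (Finset.univ.filter fun v => α₁ v ≠ α₂ v).card) := by
  classical
  constructor
  · rintro ⟨A, B, hdisj, hA, hB, hk⟩
    refine ⟨fun v => !(decide (v ∈ A)), fun v => !(decide (v ∈ B)), ?_, ?_, ?_⟩
    · intro u v huv
      by_contra h
      push_neg at h
      obtain ⟨h1, h2⟩ := h
      simp at h1 h2
      exact hA u h1 v h2 huv
    · intro u v huv
      by_contra h
      push_neg at h
      obtain ⟨h1, h2⟩ := h
      simp at h1 h2
      exact hB u h1 v h2 huv
    · have : (Finset.univ.filter fun v =>
          (!(decide (v ∈ A))) ≠ (!(decide (v ∈ B)))) = A ∪ B := by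
        ext v
        simp only [Finset.mem_filter, Finset.mem_univ, true_and, Finset.mem_union,
          ne_eq, Bool.not_inj_iff, decide_eq_decide]
        constructor
        · intro h
          by_contra hc
          push_neg at hc
          exact h (iff_of_false hc.1 hc.2)
        · intro h hiff
          rcases h with h | h
          · exact Finset.disjoint_left.mp hdisj h (hiff.mp h)
          · exact Finset.disjoint_left.mp hdisj (hiff.mpr h) h
      rw [this, Finset.card_union_of_disjoint hdisj]
      exact hk
  · rintro ⟨α₁, α₂, h1, h2, hk⟩
    refine ⟨Finset.univ.filter fun v => α₁ v = false ∧ α₂ v = true,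
            Finset.univ.filter fun v => α₂ v = false ∧ α₁ v = true, ?_, ?_, ?_, ?_⟩
    · rw [Finset.disjoint_left]
      intro v hv hv'
      simp only [Finset.mem_filter, Finset.mem_univ, true_and] at hv hv'
      rw [hv.1] at hv'
      exact absurd hv'.2 (by simp)
    · intro u hu v hv huv
      simp only [Finset.mem_filter, Finset.mem_univ, true_and] at hu hv
      rcases h1 u v huv with h | h
      · rw [hu.1] at h; exact absurd h (by simp)
      · rw [hv.1] at h; exact absurd h (by simp)
    · intro u hu v hv huv
      simp only [Finset.mem_filter, Finset.mem_univ, true_and] at hu hv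
      rcases h2 u v huv with h | h
      · rw [hu.1] at h; exact absurd h (by simp)
      · rw [hv.1] at h; exact absurd h (by simp)
    · refine le_trans hk ?_
      rw [← Finset.card_union_of_disjoint]
      · apply Finset.card_le_card
        intro v hv
        simp only [Finset.mem_filter, Finset.mem_univ, true_and, ne_eq,
          Finset.mem_union] at hv ⊢
        cases hb1 : α₁ v <;> cases hb2 : α₂ v <;> simp_all
      · rw [Finset.disjoint_left]
        intro v hv hv'
        simp only [Finset.mem_filter, Finset.mem_univ, true_and] at hv hv'
        rw [hv.1] at hv'
        exact absurd hv'.2 (by simp)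
end

section
/- Let φ be a 2CNF formula over variables x₁, …, x_n and let s be a natural number. There exist two satisfying assignments α₁, α₂ of φ with |{i : α₁(x_i) ≠ α₂(x_i)}| ≥ n − s if and only if there exists a set T of at most s asynchronous clauses of φ* (i.e., T ⊆ S with |T| ≤ s) such that the formula obtained from φ* by removing the clauses in T is satisfiable. -/
/-- An assignment satisfies a literal `(v, b)` iff it assigns `b` to `v`. -/
def SatLit {V : Type*} (α : V → Bool) (l : V × Bool) : Prop :=
  α l.1 = l.2

/-- An assignment satisfies a clause (a finite set of literals) iff it
satisfies at least one of its literals. -/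
def SatClause {V : Type*} (α : V → Bool) (C : Finset (V × Bool)) : Prop :=
  ∃ l ∈ C, SatLit α l

/-- An assignment satisfies a CNF formula (a finite set of clauses) iff it
satisfies every clause. -/
def SatCNF {V : Type*} (α : V → Bool) (φ : Finset (Finset (V × Bool))) : Prop :=
  ∀ C ∈ φ, SatClause α C

/-- The copy of a clause over `X = Fin n` on the `X`-side of `X ∪ Y`. -/
def liftX {n : ℕ} (C : Finset (Fin n × Bool)) : Finset ((Fin n ⊕ Fin n) × Bool) :=
  C.image fun l => (Sum.inl l.1, l.2)

/-- The copy of a clause over `X = Fin n` on the fresh `Y`-side of `X ∪ Y`. -/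
def liftY {n : ℕ} (C : Finset (Fin n × Bool)) : Finset ((Fin n ⊕ Fin n) × Bool) :=
  C.image fun l => (Sum.inr l.1, l.2)

/-- The set `S` of asynchronous clauses: `(x_i ∨ y_i)` and `(¬x_i ∨ ¬y_i)`
for each `1 ≤ i ≤ n`. -/
def asyncClauses (n : ℕ) : Finset (Finset ((Fin n ⊕ Fin n) × Bool)) :=
  ((Finset.univ : Finset (Fin n)).image fun i =>
      ({(Sum.inl i, true), (Sum.inr i, true)} : Finset ((Fin n ⊕ Fin n) × Bool))) ∪
  ((Finset.univ : Finset (Fin n)).image fun i =>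
      ({(Sum.inl i, false), (Sum.inr i, false)} : Finset ((Fin n ⊕ Fin n) × Bool)))

/-- The formula `φ* = φ ∧ φ' ∧ ⋀ᵢ (xᵢ ∨ yᵢ) ∧ (¬xᵢ ∨ ¬yᵢ)`. -/
def phiStar {n : ℕ} (φ : Finset (Finset (Fin n × Bool))) :
    Finset (Finset ((Fin n ⊕ Fin n) × Bool)) :=
  φ.image liftX ∪ φ.image liftY ∪ asyncClauses n

lemma mem_async {n : ℕ} {C : Finset ((Fin n ⊕ Fin n) × Bool)} :
    C ∈ asyncClauses n ↔ ∃ i : Fin n, ∃ b : Bool,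
      C = {(Sum.inl i, b), (Sum.inr i, b)} := by
  simp only [asyncClauses, Finset.mem_union, Finset.mem_image, Finset.mem_univ, true_and]
  constructor
  · rintro (⟨i, rfl⟩ | ⟨i, rfl⟩)
    exacts [⟨i, true, rfl⟩, ⟨i, false, rfl⟩]
  · rintro ⟨i, b, rfl⟩
    cases b
    · exact Or.inr ⟨i, rfl⟩
    · exact Or.inl ⟨i, rfl⟩

lemma liftX_not_async {n : ℕ} (C : Finset (Fin n × Bool)) :
    liftX C ∉ asyncClauses n := by
  intro h
  rw [mem_async] at h
  obtain ⟨i, b, hEq⟩ := h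
  have : (Sum.inr i, b) ∈ liftX C := by rw [hEq]; simp
  simp [liftX, Finset.mem_image] at this

lemma liftY_not_async {n : ℕ} (C : Finset (Fin n × Bool)) :
    liftY C ∉ asyncClauses n := by
  intro h
  rw [mem_async] at h
  obtain ⟨i, b, hEq⟩ := h
  have : (Sum.inl i, b) ∈ liftY C := by rw [hEq]; simp
  simp [liftY, Finset.mem_image] at this

/-- Lemma 3: a pair of satisfying assignments of a 2CNF formula `φ` at Hamming
distance ≥ n - s exists iff deleting at most `s` asynchronous clauses from `φ*`
makes it satisfiable. -/
theorem dissimilar_pair_iff_async_deletion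
    (n : ℕ) (φ : Finset (Finset (Fin n × Bool)))
    (h2 : ∀ C ∈ φ, C.card ≤ 2) (s : ℕ) :
    (∃ α₁ α₂ : Fin n → Bool, SatCNF α₁ φ ∧ SatCNF α₂ φ ∧
      n - s ≤ (Finset.univ.filter fun i => α₁ i ≠ α₂ i).card) ↔
    (∃ T : Finset (Finset ((Fin n ⊕ Fin n) × Bool)),
      T ⊆ asyncClauses n ∧ T.card ≤ s ∧
      ∃ β : (Fin n ⊕ Fin n) → Bool, SatCNF β (phiStar φ \ T)) := by
  classical
  constructor
  · rintro ⟨α₁, α₂, hs1, hs2, hd⟩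
    set Agree : Finset (Fin n) := Finset.univ.filter (fun i => α₁ i = α₂ i) with hA
    set T : Finset (Finset ((Fin n ⊕ Fin n) × Bool)) :=
      Agree.image (fun i => ({(Sum.inl i, !α₁ i), (Sum.inr i, !α₁ i)} :
        Finset ((Fin n ⊕ Fin n) × Bool))) with hT
    have hsplit := Finset.card_filter_add_card_filter_not
      (s := (Finset.univ : Finset (Fin n))) (p := fun i => α₁ i = α₂ i)
    simp only [Finset.card_univ, Fintype.card_fin] at hsplit
    have hdn : (Finset.univ.filter fun i => ¬ α₁ i = α₂ i).card =
        (Finset.univ.filter fun i => α₁ i ≠ α₂ i).card := rfl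
    have hAc : Agree.card ≤ s := by
      rw [hA]
      omega
    refine ⟨T, ?_, ?_, Sum.elim α₁ α₂, ?_⟩
    · intro C hC
      rw [hT] at hC
      simp only [Finset.mem_image] at hC
      obtain ⟨i, _, rfl⟩ := hC
      exact mem_async.mpr ⟨i, !α₁ i, rfl⟩
    · exact le_trans Finset.card_image_le hAc
    · intro C hC
      rw [Finset.mem_sdiff] at hC
      obtain ⟨hC1, hC2⟩ := hC
      simp only [phiStar, Finset.mem_union, Finset.mem_image] at hC1
      rcases hC1 with ((⟨D, hD, rfl⟩ | ⟨D, hD, rfl⟩) | hCa)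
      · obtain ⟨l, hl, hsat⟩ := hs1 D hD
        exact ⟨(Sum.inl l.1, l.2), Finset.mem_image_of_mem _ hl, hsat⟩
      · obtain ⟨l, hl, hsat⟩ := hs2 D hD
        exact ⟨(Sum.inr l.1, l.2), Finset.mem_image_of_mem _ hl, hsat⟩
      · rw [mem_async] at hCa
        obtain ⟨i, b, rfl⟩ := hCa
        by_cases hb1 : α₁ i = b
        · exact ⟨(Sum.inl i, b), by simp, hb1⟩
        by_cases hb2 : α₂ i = b
        · exact ⟨(Sum.inr i, b), by simp, hb2⟩
        · exfalso
          apply hC2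
          have hAg : α₁ i = α₂ i := by cases b <;> simp_all
          have hbb : (!(α₁ i)) = b := by cases b <;> simp_all
          rw [hT]
          refine Finset.mem_image.mpr ⟨i, ?_, by rw [hbb]⟩
          rw [hA]
          exact Finset.mem_filter.mpr ⟨Finset.mem_univ i, hAg⟩
  · rintro ⟨T, hTs, hTc, β, hβ⟩
    refine ⟨β ∘ Sum.inl, β ∘ Sum.inr, ?_, ?_, ?_⟩
    · intro C hC
      have hmem : liftX C ∈ phiStar φ \ T := by
        rw [Finset.mem_sdiff]
        refine ⟨?_, fun h => liftX_not_async C (hTs h)⟩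
        simp only [phiStar, Finset.mem_union, Finset.mem_image]
        exact Or.inl (Or.inl ⟨C, hC, rfl⟩)
      obtain ⟨l', hl', hsat⟩ := hβ _ hmem
      obtain ⟨l, hl, rfl⟩ := Finset.mem_image.mp hl'
      exact ⟨l, hl, hsat⟩
    · intro C hC
      have hmem : liftY C ∈ phiStar φ \ T := by
        rw [Finset.mem_sdiff]
        refine ⟨?_, fun h => liftY_not_async C (hTs h)⟩
        simp only [phiStar, Finset.mem_union, Finset.mem_image]
        exact Or.inl (Or.inr ⟨C, hC, rfl⟩)
      obtain ⟨l', hl', hsat⟩ := hβ _ hmem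
      obtain ⟨l, hl, rfl⟩ := Finset.mem_image.mp hl'
      exact ⟨l, hl, hsat⟩
    · have key : ∀ i : Fin n, β (Sum.inl i) = β (Sum.inr i) →
          ({(Sum.inl i, !β (Sum.inl i)), (Sum.inr i, !β (Sum.inl i))} :
            Finset ((Fin n ⊕ Fin n) × Bool)) ∈ T := by
        intro i he
        by_contra hnT
        have hmem : ({(Sum.inl i, !β (Sum.inl i)), (Sum.inr i, !β (Sum.inl i))} :
            Finset ((Fin n ⊕ Fin n) × Bool)) ∈ phiStar φ \ T := by
          rw [Finset.mem_sdiff]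
          refine ⟨?_, hnT⟩
          exact Finset.mem_union_right _ (mem_async.mpr ⟨i, _, rfl⟩)
        obtain ⟨l, hl, hsat⟩ := hβ _ hmem
        simp only [Finset.mem_insert, Finset.mem_singleton] at hl
        rcases hl with rfl | rfl
        · simp [SatLit] at hsat
        · rw [SatLit] at hsat
          simp only at hsat
          rw [← he] at hsat
          simp at hsat
      have hcard : (Finset.univ.filter fun i => β (Sum.inl i) = β (Sum.inr i)).card
          ≤ T.card := by
        apply Finset.card_le_card_of_injOn
          (fun i => ({(Sum.inl i, !β (Sum.inl i)), (Sum.inr i, !β (Sum.inl i))} :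
            Finset ((Fin n ⊕ Fin n) × Bool)))
        · intro i hi
          exact key i (by simpa using hi)
        · intro i _ j _ heq
          simp only at heq
          have h1 : (Sum.inl i, !β (Sum.inl i)) ∈
              ({(Sum.inl j, !β (Sum.inl j)), (Sum.inr j, !β (Sum.inl j))} :
                Finset ((Fin n ⊕ Fin n) × Bool)) := by
            rw [← heq]; exact Finset.mem_insert_self _ _
          simp only [Finset.mem_insert, Finset.mem_singleton, Prod.mk.injEq] at h1
          rcases h1 with ⟨h, _⟩ | ⟨h, _⟩
          · exact Sum.inl.inj h
          · exact absurd h (by simp)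
      have hsplit := Finset.card_filter_add_card_filter_not
        (s := (Finset.univ : Finset (Fin n))) (p := fun i => β (Sum.inl i) = β (Sum.inr i))
      simp only [Finset.card_univ, Fintype.card_fin] at hsplit
      have hfe : (Finset.univ.filter fun i => ((β ∘ Sum.inl) i ≠ (β ∘ Sum.inr) i)).card =
          (Finset.univ.filter fun i => ¬ β (Sum.inl i) = β (Sum.inr i)).card := rfl
      rw [hfe]
      omega
end

section
/- Let φ be a 2CNF formula in which every clause consists of exactly two literals, let S be a subset of the clauses of φ, let s be a natural number, and let G_I and N be the graph and the number defined from (φ, S, s) as in the context. There exists a set T ⊆ S with |T| ≤ s such that the formula obtained from φ by removing the clauses in T is satisfiable if and only if G_I has a vertex cover of size at most N + s. -/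
/-- The literal in slot `d` (the `d`-side) of clause `c` of `φ`.
A 2CNF formula `φ` is modelled as a list of clauses, each clause being a pair
of (not necessarily distinct) literals, a literal being a pair
(variable, polarity). -/
def litAt {X : Type*} (φ : List ((X × Bool) × (X × Bool)))
    (c : Fin φ.length) (d : Bool) : X × Bool :=
  if d then (φ.get c).2 else (φ.get c).1

/-- Vertices of the graph `G_I`: a vertex `(p, c, d, j)` stands for
`v^j_{ℓ, i}` where `i` is the occurrence of variable `var(litAt φ c d)` sitting
in slot `(c, d)`, and `ℓ` is that variable with polarity `p`.
(Occurrences of a variable `x` are in canonical bijection with the slots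
containing `x`, so each literal `ℓ` over `x` gets `n_x · (s+1)` vertices.) -/
abbrev GIVert {X : Type*} (φ : List ((X × Bool) × (X × Bool))) (s : ℕ) :=
  Bool × Fin φ.length × Bool × Fin (s + 1)

/-- The edge relation of the graph `G_I` built from `(φ, S, s)`:
variable edges, hard-clause edges (for clauses not in `S`, one per level `j`),
and soft-clause edges (for clauses in `S`, only at level `j = 0`). -/
def GIRel {X : Type*} (φ : List ((X × Bool) × (X × Bool)))
    (S : Finset (Fin φ.length)) (s : ℕ)
    (a b : GIVert φ s) : Prop :=
  -- variable edge: `a ∈ V(x)`, `b ∈ V(¬x)` for a common variable `x`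
  ((litAt φ a.2.1 a.2.2.1).1 = (litAt φ b.2.1 b.2.2.1).1 ∧ a.1 ≠ b.1) ∨
  -- hard-clause edge: both endpoints carry the literals of the same clause
  -- `c ∉ S`, at an arbitrary common level `j`
  (a.2.1 = b.2.1 ∧ a.2.2.1 ≠ b.2.2.1 ∧ a.2.2.2 = b.2.2.2 ∧
    a.1 = (litAt φ a.2.1 a.2.2.1).2 ∧ b.1 = (litAt φ b.2.1 b.2.2.1).2 ∧
    a.2.1 ∉ S) ∨
  -- soft-clause edge: as above but `c ∈ S` and only at level `j = 0`
  (a.2.1 = b.2.1 ∧ a.2.2.1 ≠ b.2.2.1 ∧ a.2.2.2 = 0 ∧ b.2.2.2 = 0 ∧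
    a.1 = (litAt φ a.2.1 a.2.2.1).2 ∧ b.1 = (litAt φ b.2.1 b.2.2.1).2 ∧
    a.2.1 ∈ S)

/-- The graph `G_I` built from the instance `I = (φ, S, s)`. -/
def GI {X : Type*} (φ : List ((X × Bool) × (X × Bool)))
    (S : Finset (Fin φ.length)) (s : ℕ) : SimpleGraph (GIVert φ s) :=
  SimpleGraph.fromRel (GIRel φ S s)

/-- Lemma 4 (key equivalence): at most `s` clauses of `S` can be deleted from
`φ` to make it satisfiable iff `G_I` has a vertex cover of size at most
`N + s`, where `N = Σ_x n_x · (s+1) = 2·|φ|·(s+1)`. -/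
theorem almost2SAT_iff_vertex_cover
    {X : Type*} (φ : List ((X × Bool) × (X × Bool)))
    (S : Finset (Fin φ.length)) (s : ℕ) :
    (∃ T : Finset (Fin φ.length), T ⊆ S ∧ T.card ≤ s ∧
      ∃ α : X → Bool, ∀ c : Fin φ.length, c ∉ T →
        (α (φ.get c).1.1 = (φ.get c).1.2 ∨ α (φ.get c).2.1 = (φ.get c).2.2)) ↔
    (∃ C : Finset (GIVert φ s),
      (∀ a b : GIVert φ s, (GI φ S s).Adj a b → a ∈ C ∨ b ∈ C) ∧
      C.card ≤ 2 * φ.length * (s + 1) + s) := by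
  classical
  constructor
  · -- forward direction
    rintro ⟨T, hTS, hTcard, α, hα⟩
    set C : Finset (GIVert φ s) :=
      (Finset.univ.filter fun v : GIVert φ s => v.1 = α (litAt φ v.2.1 v.2.2.1).1)
      ∪ T.image (fun c => ((litAt φ c false).2, c, false, (0 : Fin (s+1)))) with hCdef
    have hfilter : ∀ v : GIVert φ s, v.1 = α (litAt φ v.2.1 v.2.2.1).1 → v ∈ C := by
      intro v hv
      exact Finset.mem_union_left _ (Finset.mem_filter.2 ⟨Finset.mem_univ _, hv⟩)
    have himg : ∀ c ∈ T, ((litAt φ c false).2, c, false, (0:Fin (s+1))) ∈ C := by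
      intro c hc
      exact Finset.mem_union_right _ (Finset.mem_image.2 ⟨c, hc, rfl⟩)
    have key : ∀ a b : GIVert φ s, GIRel φ S s a b → a ∈ C ∨ b ∈ C := by
      rintro ⟨pa, ca, da, ja⟩ ⟨pb, cb, db, jb⟩ h
      have hsatcase : ∀ (hc : ca = cb) (hd : da ≠ db)
          (hpa : pa = (litAt φ ca da).2) (hpb : pb = (litAt φ cb db).2),
          (α (φ.get ca).1.1 = (φ.get ca).1.2 ∨ α (φ.get ca).2.1 = (φ.get ca).2.2) →
          ((pa, ca, da, ja) : GIVert φ s) ∈ C ∨ ((pb, cb, db, jb) : GIVert φ s) ∈ C := by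
        intro hc hd hpa hpb hsat
        subst hc
        rcases hsat with h0 | h1
        · cases da
          · exact Or.inl (hfilter _ (by rw [hpa]; simpa [litAt] using h0.symm))
          · have hdb : db = false := by cases db <;> simp_all
            subst hdb
            exact Or.inr (hfilter _ (by rw [hpb]; simpa [litAt] using h0.symm))
        · cases da
          · have hdb : db = true := by cases db <;> simp_all
            subst hdb
            exact Or.inr (hfilter _ (by rw [hpb]; simpa [litAt] using h1.symm))
          · exact Or.inl (hfilter _ (by rw [hpa]; simpa [litAt] using h1.symm))
      rcases h with ⟨hvar, hne⟩ | ⟨hc, hd, hj, hpa, hpb, hcS⟩ | ⟨hc, hd, hja, hjb, hpa, hpb, hcS⟩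
      · -- variable edge
        simp only at hvar hne
        by_cases h1 : pa = α (litAt φ ca da).1
        · exact Or.inl (hfilter _ h1)
        · refine Or.inr (hfilter _ ?_)
          show pb = α (litAt φ cb db).1
          rw [← hvar]
          cases pa <;> cases pb <;> simp_all
      · -- hard-clause edge
        simp only at hc hd hj hpa hpb hcS
        have hcT : ca ∉ T := fun hx => hcS (hTS hx)
        exact hsatcase hc hd hpa hpb (hα ca hcT)
      · -- soft-clause edge
        simp only at hc hd hja hjb hpa hpb hcS
        by_cases hcT : ca ∈ T
        · subst hc
          cases da
          · left
            rw [hpa, hja]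
            exact himg ca hcT
          · have hdb : db = false := by cases db <;> simp_all
            subst hdb
            right
            rw [hpb, hjb]
            exact himg ca hcT
        · exact hsatcase hc hd hpa hpb (hα ca hcT)
    refine ⟨C, ?_, ?_⟩
    · intro a b hab
      rw [GI, SimpleGraph.fromRel_adj] at hab
      rcases hab.2 with h | h
      · exact key a b h
      · exact (key b a h).symm
    · have h1 : (Finset.univ.filter fun v : GIVert φ s =>
          v.1 = α (litAt φ v.2.1 v.2.2.1).1).card ≤ 2 * φ.length * (s+1) := by
        have huniv : (Finset.univ : Finset (Fin φ.length × Bool × Fin (s+1))).card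
            = 2 * φ.length * (s+1) := by
          simp [Finset.card_univ]
          ring
        rw [← huniv]
        apply Finset.card_le_card_of_injOn (fun v : GIVert φ s => v.2)
          (fun v _ => Finset.mem_univ v.2)
        intro v hv w hw hvw
        simp only [Finset.coe_filter, Set.mem_setOf_eq, Finset.mem_univ, true_and] at hv hw
        simp only at hvw
        have : v.1 = w.1 := by rw [hv, hw, hvw]
        exact Prod.ext this hvw
      calc C.card ≤ _ + _ := Finset.card_union_le _ _
        _ ≤ 2 * φ.length * (s+1) + s := by
            have := Finset.card_image_le (s := T)
              (f := fun c => (((litAt φ c false).2, c, false, (0:Fin (s+1))) : GIVert φ s))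
            omega
  · -- backward direction
    rintro ⟨C, hC, hCcard⟩
    -- an adjacency helper
    have hadj : ∀ a b : GIVert φ s, a ≠ b → GIRel φ S s a b → a ∈ C ∨ b ∈ C := by
      intro a b hne h
      exact hC a b (by rw [GI, SimpleGraph.fromRel_adj]; exact ⟨hne, Or.inl h⟩)
    -- every position is covered in at least one polarity
    have hbase : ∀ q : Fin φ.length × Bool × Fin (s+1),
        ((true, q) : GIVert φ s) ∈ C ∨ ((false, q) : GIVert φ s) ∈ C := by
      intro q
      apply hadj
      · simp
      · exact Or.inl ⟨rfl, by simp⟩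
    -- the assignment extracted from the cover
    set α : X → Bool := fun x =>
      if (∃ q : Fin φ.length × Bool × Fin (s+1),
        (litAt φ q.1 q.2.1).1 = x ∧ ((true, q) : GIVert φ s) ∈ C ∧
        ((false, q) : GIVert φ s) ∉ C) then true else false with hαdef
    have hαtrue : ∀ x : X, α x = true ↔ (∃ q : Fin φ.length × Bool × Fin (s+1),
        (litAt φ q.1 q.2.1).1 = x ∧ ((true, q) : GIVert φ s) ∈ C ∧
        ((false, q) : GIVert φ s) ∉ C) := by
      intro x
      simp only [hαdef]
      by_cases h : (∃ q : Fin φ.length × Bool × Fin (s+1),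
          (litAt φ q.1 q.2.1).1 = x ∧ ((true, q) : GIVert φ s) ∈ C ∧
          ((false, q) : GIVert φ s) ∉ C) <;> simp [h]
    -- singly covered positions determine α
    have hsingle : ∀ (p : Bool) (q : Fin φ.length × Bool × Fin (s+1)),
        ((p, q) : GIVert φ s) ∈ C → ((!p, q) : GIVert φ s) ∉ C →
        α ((litAt φ q.1 q.2.1).1) = p := by
      intro p q hin hout
      cases p
      · -- p = false : must show no true-singly-covered position with same variable
        simp only [Bool.not_false] at hout
        rw [Bool.eq_false_iff, Ne, hαtrue]
        rintro ⟨q', hvar, hin', hout'⟩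
        -- edge between (true, q) and (false, q') : both outside C, contradiction
        have := hadj (true, q) (false, q') (by simp) (Or.inl ⟨hvar.symm, by simp⟩)
        tauto
      · rw [hαtrue]
        exact ⟨q, rfl, hin, by simpa using hout⟩
    -- doubly covered positions
    set D : Finset (Fin φ.length × Bool × Fin (s+1)) :=
      Finset.univ.filter fun q => ((true, q) : GIVert φ s) ∈ C ∧
        ((false, q) : GIVert φ s) ∈ C with hDdef
    -- counting: |C| ≥ N + |D|
    have hcount : 2 * φ.length * (s+1) + D.card ≤ C.card := by
      have hfib : C.card = ∑ q : Fin φ.length × Bool × Fin (s+1),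
          (C.filter fun v => v.2 = q).card :=
        Finset.card_eq_sum_card_fiberwise (fun v _ => Finset.mem_univ v.2)
      have hlower : ∀ q : Fin φ.length × Bool × Fin (s+1),
          (if q ∈ D then 2 else 1) ≤ (C.filter fun v => v.2 = q).card := by
        intro q
        by_cases hq : q ∈ D
        · rw [if_pos hq]
          rw [hDdef] at hq
          simp only [Finset.mem_filter, Finset.mem_univ, true_and] at hq
          have hsub : ({(true, q), (false, q)} : Finset (GIVert φ s)) ⊆
              C.filter fun v => v.2 = q := by
            intro v hv
            simp only [Finset.mem_insert, Finset.mem_singleton] at hv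
            rcases hv with rfl | rfl <;> simp [Finset.mem_filter, hq.1, hq.2]
          have := Finset.card_le_card hsub
          simpa using this
        · rw [if_neg hq]
          rcases hbase q with h | h
          · exact Finset.card_pos.2 ⟨(true, q), Finset.mem_filter.2 ⟨h, rfl⟩⟩
          · exact Finset.card_pos.2 ⟨(false, q), Finset.mem_filter.2 ⟨h, rfl⟩⟩
      have hsum : ∑ q : Fin φ.length × Bool × Fin (s+1), (if q ∈ D then 2 else 1)
          ≤ C.card := by
        rw [hfib]
        exact Finset.sum_le_sum (fun q _ => hlower q)
      have heval : ∑ q : Fin φ.length × Bool × Fin (s+1), (if q ∈ D then 2 else 1)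
          = 2 * φ.length * (s+1) + D.card := by
        have : ∀ q : Fin φ.length × Bool × Fin (s+1),
            (if q ∈ D then 2 else 1) = 1 + (if q ∈ D then 1 else 0) := by
          intro q; split <;> rfl
        simp_rw [this]
        rw [Finset.sum_add_distrib, Finset.sum_ite_mem, Finset.univ_inter,
          Finset.sum_const, Finset.sum_const, Finset.card_univ, smul_eq_mul,
          smul_eq_mul, mul_one, mul_one]
        simp
        ring
      omega
    have hDcard : D.card ≤ s := by omega
    -- key: unsatisfied clause forces a doubly-covered position at each present level
    have hkey : ∀ (c : Fin φ.length) (j : Fin (s+1)),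
        (c ∉ S ∨ (c ∈ S ∧ j = 0)) →
        ¬ (α (φ.get c).1.1 = (φ.get c).1.2 ∨ α (φ.get c).2.1 = (φ.get c).2.2) →
        ∃ d : Bool, (c, d, j) ∈ D := by
      intro c j hcase hunsat
      push_neg at hunsat
      obtain ⟨h0, h1⟩ := hunsat
      set a : GIVert φ s := ((φ.get c).1.2, c, false, j) with ha
      set b : GIVert φ s := ((φ.get c).2.2, c, true, j) with hb
      have hrel : GIRel φ S s a b := by
        rcases hcase with hcS | ⟨hcS, hj⟩
        · refine Or.inr (Or.inl ⟨rfl, by simp, rfl, ?_, ?_, hcS⟩) <;> simp [ha, hb, litAt]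
        · refine Or.inr (Or.inr ⟨rfl, by simp, ?_, ?_, ?_, ?_, hcS⟩) <;>
            simp [ha, hb, hj, litAt]
      have hcov := hadj a b (by simp [ha, hb]) hrel
      -- whichever endpoint is in C, the opposite polarity at the same position
      -- must also be in C (else `hsingle` would force the clause satisfied)
      have hmem : ∀ (p : Bool) (d : Bool), ((p, c, d, j) : GIVert φ s) ∈ C →
          p = (litAt φ c d).2 → α ((litAt φ c d).1) ≠ p → (c, d, j) ∈ D := by
        intro p d hin hp hne
        have hother : ((!p, c, d, j) : GIVert φ s) ∈ C := by
          by_contra hout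
          exact hne (hsingle p (c, d, j) hin hout)
        rw [hDdef]
        simp only [Finset.mem_filter, Finset.mem_univ, true_and]
        cases p
        · simpa using And.intro hother hin
        · simpa using And.intro hin hother
      rcases hcov with hin | hin
      · refine ⟨false, hmem _ false hin (by simp [litAt]) ?_⟩
        simpa [litAt] using h0
      · refine ⟨true, hmem _ true hin (by simp [litAt]) ?_⟩
        simpa [litAt] using h1
    -- all hard clauses are satisfied
    have hhard : ∀ c : Fin φ.length, c ∉ S →
        (α (φ.get c).1.1 = (φ.get c).1.2 ∨ α (φ.get c).2.1 = (φ.get c).2.2) := by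
      intro c hcS
      by_contra hunsat
      have hfn : ∀ j : Fin (s+1), ∃ d : Bool, (c, d, j) ∈ D :=
        fun j => hkey c j (Or.inl hcS) hunsat
      choose f hf using hfn
      have : (s+1) ≤ D.card := by
        have h2 := Finset.card_le_card_of_injOn
          (s := (Finset.univ : Finset (Fin (s+1)))) (t := D)
          (fun j : Fin (s+1) => (c, f j, j)) (fun j _ => hf j)
          (by
            intro j _ j' _ h
            simp only at h
            simpa using congrArg (fun q : Fin φ.length × Bool × Fin (s+1) => q.2.2) h)
        simpa using h2
      omega
    -- the deletion set
    refine ⟨S.filter (fun c => ¬ (α (φ.get c).1.1 = (φ.get c).1.2 ∨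
        α (φ.get c).2.1 = (φ.get c).2.2)), Finset.filter_subset _ _, ?_, α, ?_⟩
    · -- cardinality bound via injection into D
      have hfn : ∀ c : Fin φ.length, ∃ d : Bool,
          c ∈ S.filter (fun c => ¬ (α (φ.get c).1.1 = (φ.get c).1.2 ∨
            α (φ.get c).2.1 = (φ.get c).2.2)) → (c, d, (0 : Fin (s+1))) ∈ D := by
        intro c
        by_cases hc : c ∈ S.filter (fun c => ¬ (α (φ.get c).1.1 = (φ.get c).1.2 ∨
            α (φ.get c).2.1 = (φ.get c).2.2))
        · simp only [Finset.mem_filter] at hc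
          obtain ⟨d, hd⟩ := hkey c 0 (Or.inr ⟨hc.1, rfl⟩) hc.2
          exact ⟨d, fun _ => hd⟩
        · exact ⟨true, fun h => absurd h hc⟩
      choose f hf using hfn
      calc (S.filter _).card ≤ D.card := by
            apply Finset.card_le_card_of_injOn
              (fun c : Fin φ.length => ((c, f c, (0 : Fin (s+1))) :
                Fin φ.length × Bool × Fin (s+1)))
              (fun c hc => hf c hc)
            intro c _ c' _ h
            simp only at h
            simpa using congrArg (fun q : Fin φ.length × Bool × Fin (s+1) => q.1) h
        _ ≤ s := hDcard
    · intro c hcT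
      by_cases hcS : c ∈ S
      · by_contra hunsat
        exact hcT (Finset.mem_filter.2 ⟨hcS, hunsat⟩)
      · exact hhard c hcS
end

section
/- Let φ be a 2CNF formula in which every clause consists of exactly two literals, let S be a subset of its clauses, let s be a natural number, and let G_I be the graph defined from (φ, S, s) as in the context. Then G_I has a perfect matching; in particular G_I has a matching of size N = Σ_x n_x·(s + 1) and exactly 2N vertices. -/
/-- The canonical perfect matching of `G_I`, via variable edges. -/
def matchM {X : Type*} (φ : List ((X × Bool) × (X × Bool)))
    (S : Finset (Fin φ.length)) (s : ℕ) : (GI φ S s).Subgraph where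
  verts := Set.univ
  Adj a b := a.2 = b.2 ∧ a.1 ≠ b.1
  adj_sub := by
    rintro a b ⟨h1, h2⟩
    rw [GI, SimpleGraph.fromRel_adj]
    refine ⟨fun h => h2 (congrArg Prod.fst h), Or.inl (Or.inl ⟨?_, h2⟩)⟩
    rw [show a.2.1 = b.2.1 from congrArg Prod.fst h1,
      show a.2.2.1 = b.2.2.1 from congrArg (fun t => t.2.1) h1]
  edge_vert := fun _ => Set.mem_univ _
  symm := ⟨fun a b ⟨h1, h2⟩ => ⟨h1.symm, h2.symm⟩⟩

lemma matchM_isMatching {X : Type*} (φ : List ((X × Bool) × (X × Bool)))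
    (S : Finset (Fin φ.length)) (s : ℕ) : (matchM φ S s).IsMatching := by
  intro v _
  refine ⟨(!v.1, v.2), ⟨rfl, by simp⟩, ?_⟩
  rintro ⟨wp, wt⟩ ⟨h1, h2⟩
  simp only [matchM] at h1 h2
  obtain ⟨vp, vt⟩ := v
  simp_all
  cases vp <;> cases wp <;> simp_all

/-- `G_I` has a perfect matching; in particular it has a matching of size
`N = Σ_x n_x · (s+1) = 2·|φ|·(s+1)` and exactly `2N` vertices. -/
theorem GI_has_perfect_matching
    {X : Type*} (φ : List ((X × Bool) × (X × Bool)))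
    (S : Finset (Fin φ.length)) (s : ℕ) :
    (∃ M : (GI φ S s).Subgraph, M.IsPerfectMatching) ∧
    (∃ M : (GI φ S s).Subgraph, M.IsMatching ∧
      M.edgeSet.ncard = 2 * φ.length * (s + 1)) ∧
    Fintype.card (GIVert φ s) = 2 * (2 * φ.length * (s + 1)) := by
  have hm := matchM_isMatching φ S s
  refine ⟨⟨matchM φ S s, hm, fun v => Set.mem_univ v⟩, ⟨matchM φ S s, hm, ?_⟩, ?_⟩
  · have hinj : Function.Injective
        (fun t : Fin φ.length × Bool × Fin (s + 1) =>
          s(((true, t) : GIVert φ s), (false, t))) := by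
      intro t t' h
      simpa [Sym2.eq_iff, Prod.ext_iff] using h
    have heq : (matchM φ S s).edgeSet = Set.range
        (fun t : Fin φ.length × Bool × Fin (s + 1) =>
          s(((true, t) : GIVert φ s), (false, t))) := by
      ext e
      induction e with
      | h a b =>
        simp only [SimpleGraph.Subgraph.mem_edgeSet, Set.mem_range]
        constructor
        · rintro ⟨h1, h2⟩
          obtain ⟨ap, at'⟩ := a; obtain ⟨bp, bt⟩ := b
          simp only at h1 h2
          subst h1
          exact ⟨at', by cases ap <;> cases bp <;> simp_all [Sym2.eq_iff]⟩
        · rintro ⟨t, ht⟩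
          rw [Sym2.eq_iff] at ht
          rcases ht with ⟨h1, h2⟩ | ⟨h1, h2⟩ <;> subst h1 <;> subst h2 <;>
            exact ⟨rfl, by simp⟩
    rw [heq, ← Set.image_univ, Set.ncard_image_of_injective _ hinj, Set.ncard_univ,
      Nat.card_eq_fintype_card]
    simp [Fintype.card_prod]
    ring
  · simp [Fintype.card_prod]
    ring
end

section
/- Let x₁, …, x_k ∈ (Fin n → Bool) and let 1 ≤ i < j ≤ k. Define a new tuple y₁, …, y_k by y_i = x_i ⊓ x_j, y_j = x_i ⊔ x_j, and y_ℓ = x_ℓ for ℓ ∉ {i, j}, where ⊓ and ⊔ are pointwise Boolean AND and OR. Then Σ_{1 ≤ p < q ≤ k} hammingDist(x_p, x_q) = Σ_{1 ≤ p < q ≤ k} hammingDist(y_p, y_q). -/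
open Finset

private lemma double_sum_lt (k : ℕ) (f : Fin k → Fin k → ℕ)
    (hsymm : ∀ p q, f p q = f q p) (hdiag : ∀ p, f p p = 0) :
    (∑ p : Fin k, ∑ q : Fin k, f p q) =
      2 * ∑ p : Fin k, ∑ q : Fin k, (if p < q then f p q else 0) := by
  have hsplit : ∀ p q : Fin k,
      f p q = (if p < q then f p q else 0) + (if q < p then f p q else 0) := by
    intro p q
    rcases lt_trichotomy p q with h | h | h
    · simp [h, asymm h]
    · simp [h, hdiag]
    · simp [h, not_lt_of_gt h]
  calc (∑ p : Fin k, ∑ q : Fin k, f p q)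
      = ∑ p : Fin k, ∑ q : Fin k,
          ((if p < q then f p q else 0) + (if q < p then f p q else 0)) := by
        simp_rw [← hsplit]
    _ = (∑ p : Fin k, ∑ q : Fin k, (if p < q then f p q else 0)) +
        (∑ p : Fin k, ∑ q : Fin k, (if q < p then f p q else 0)) := by
        simp [Finset.sum_add_distrib]
    _ = 2 * ∑ p : Fin k, ∑ q : Fin k, (if p < q then f p q else 0) := by
        rw [Finset.sum_comm (f := fun p q => if q < p then f p q else 0)]
        simp_rw [fun p q => hsymm q p]
        ring

private lemma perm_double_sum (k : ℕ) (w : Fin k → Bool) (σ : Equiv.Perm (Fin k)) :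
    (∑ p : Fin k, ∑ q : Fin k, (if w (σ p) = w (σ q) then 0 else 1)) =
      (∑ p : Fin k, ∑ q : Fin k, (if w p = w q then (0 : ℕ) else 1)) := by
  rw [Equiv.sum_comp σ (fun p => ∑ q : Fin k, (if w p = w q then (0:ℕ) else 1))
    |>.symm]
  exact Finset.sum_congr rfl fun p _ =>
    Equiv.sum_comp σ (fun q => if w (σ p) = w q then (0:ℕ) else 1) |>.symm ▸ rfl

/-- Uncrossing invariance: replacing a pair `x_i, x_j` (with `i < j`) by their
pointwise meet `x_i ⊓ x_j` and join `x_i ⊔ x_j` leaves the sum of pairwise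
Hamming distances unchanged. -/
theorem sum_pairwise_hammingDist_uncrossing
    (n k : ℕ) (x y : Fin k → Fin n → Bool) (i j : Fin k) (hij : i < j)
    (hyi : y i = x i ⊓ x j) (hyj : y j = x i ⊔ x j)
    (hyl : ∀ l : Fin k, l ≠ i → l ≠ j → y l = x l) :
    (∑ p : Fin k, ∑ q : Fin k, if p < q then hammingDist (x p) (x q) else 0) =
    (∑ p : Fin k, ∑ q : Fin k, if p < q then hammingDist (y p) (y q) else 0) := by
  have hne : i ≠ j := ne_of_lt hij
  -- per-coordinate invariance of the full symmetric sum
  have coord : ∀ t : Fin n,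
      (∑ p : Fin k, ∑ q : Fin k, (if x p t = x q t then (0:ℕ) else 1)) =
      (∑ p : Fin k, ∑ q : Fin k, (if y p t = y q t then (0:ℕ) else 1)) := by
    intro t
    have hyit : y i t = (x i t && x j t) := by rw [hyi]; rfl
    have hyjt : y j t = (x i t || x j t) := by rw [hyj]; rfl
    have : (∃ σ : Equiv.Perm (Fin k), ∀ p, y p t = x (σ p) t) := by
      by_cases hc : x i t = true ∧ x j t = false
      · refine ⟨Equiv.swap i j, fun p => ?_⟩
        by_cases hp : p = i
        · subst hp; simp [hyit, hc.1, hc.2, Equiv.swap_apply_left]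
        · by_cases hq : p = j
          · subst hq; simp [hyjt, hc.1, hc.2, Equiv.swap_apply_right]
          · rw [hyl p hp hq, Equiv.swap_apply_of_ne_of_ne hp hq]
      · refine ⟨1, fun p => ?_⟩
        by_cases hp : p = i
        · subst hp
          rw [hyit]
          cases ha : x p t <;> cases hb : x j t <;> simp_all
        · by_cases hq : p = j
          · subst hq
            rw [hyjt]
            cases ha : x i t <;> cases hb : x p t <;> simp_all
          · simp [hyl p hp hq]
    obtain ⟨σ, hσ⟩ := this
    simp_rw [hσ]
    exact (perm_double_sum k (fun p => x p t) σ).symm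
  -- full symmetric sums agree
  have key : (∑ p : Fin k, ∑ q : Fin k, hammingDist (x p) (x q)) =
      (∑ p : Fin k, ∑ q : Fin k, hammingDist (y p) (y q)) := by
    have hd : ∀ u v : Fin n → Bool,
        hammingDist u v = ∑ t : Fin n, (if u t = v t then 0 else 1) := by
      intro u v
      rw [hammingDist, Finset.card_filter]
      congr 1; ext t; by_cases h : u t = v t <;> simp [h]
    simp_rw [hd]
    have swap3 : ∀ (g : Fin k → Fin k → Fin n → ℕ),
        (∑ p : Fin k, ∑ q : Fin k, ∑ t : Fin n, g p q t) =
          ∑ t : Fin n, ∑ p : Fin k, ∑ q : Fin k, g p q t := by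
      intro g
      have h1 : ∀ p : Fin k, (∑ q : Fin k, ∑ t : Fin n, g p q t)
          = ∑ t : Fin n, ∑ q : Fin k, g p q t := fun p => Finset.sum_comm
      simp_rw [h1]
      exact Finset.sum_comm
    calc (∑ p : Fin k, ∑ q : Fin k, ∑ t : Fin n, (if x p t = x q t then (0:ℕ) else 1))
        = ∑ t : Fin n, ∑ p : Fin k, ∑ q : Fin k, (if x p t = x q t then (0:ℕ) else 1) :=
          swap3 _
      _ = ∑ t : Fin n, ∑ p : Fin k, ∑ q : Fin k, (if y p t = y q t then (0:ℕ) else 1) :=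
          Finset.sum_congr rfl fun t _ => coord t
      _ = ∑ p : Fin k, ∑ q : Fin k, ∑ t : Fin n, (if y p t = y q t then (0:ℕ) else 1) :=
          (swap3 _).symm
  -- conclude via the doubling lemma
  have hx := double_sum_lt k (fun p q => hammingDist (x p) (x q))
    (fun p q => hammingDist_comm _ _) (fun p => hammingDist_self _)
  have hy := double_sum_lt k (fun p q => hammingDist (y p) (y q))
    (fun p q => hammingDist_comm _ _) (fun p => hammingDist_self _)
  beta_reduce at hx hy
  omega
end

section
/- Let S be a nonempty subset of (Fin n → Bool) that is closed under pointwise Boolean AND and pointwise Boolean OR, and let k be a positive integer. Then there exists a tuple (x₁, …, x_k) ∈ S^k with x₁ ≤ x₂ ≤ ⋯ ≤ x_k in the pointwise order that maximizes Σ_{1 ≤ i < j ≤ k} hammingDist(x_i, x_j) over all tuples in S^k; i.e., for every tuple (z₁, …, z_k) ∈ S^k, Σ_{i<j} hammingDist(z_i, z_j) ≤ Σ_{i<j} hammingDist(x_i, x_j). -/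
open Finset

lemma myInf'_mem {n : ℕ} (S : Set (Fin n → Bool))
    (hand : ∀ u ∈ S, ∀ v ∈ S, u ⊓ v ∈ S)
    {ι : Type*} (t : Finset ι) (ht : t.Nonempty) (z : ι → Fin n → Bool)
    (hz : ∀ i ∈ t, z i ∈ S) : t.inf' ht z ∈ S := by
  induction ht using Finset.Nonempty.cons_induction with
  | singleton a => simpa using hz _ (by simp)
  | cons a s ha hs ih =>
      rw [Finset.inf'_cons hs]
      exact hand _ (hz a (by simp)) _ (ih (fun i hi => hz i (by simp [hi])))

lemma mySup'_mem {n : ℕ} (S : Set (Fin n → Bool))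
    (hor : ∀ u ∈ S, ∀ v ∈ S, u ⊔ v ∈ S)
    {ι : Type*} (t : Finset ι) (ht : t.Nonempty) (z : ι → Fin n → Bool)
    (hz : ∀ i ∈ t, z i ∈ S) : t.sup' ht z ∈ S := by
  induction ht using Finset.Nonempty.cons_induction with
  | singleton a => simpa using hz _ (by simp)
  | cons a s ha hs ih =>
      rw [Finset.sup'_cons hs]
      exact hor _ (hz a (by simp)) _ (ih (fun i hi => hz i (by simp [hi])))

lemma bool_sup'_true {α : Type*} (s : Finset α) (h : s.Nonempty) (f : α → Bool) :
    s.sup' h f = true ↔ ∃ a ∈ s, f a = true := by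
  induction h using Finset.Nonempty.cons_induction with
  | singleton a => simp
  | cons a s ha hs ih =>
      rw [Finset.sup'_cons]
      show (f a || s.sup' hs f) = true ↔ _
      simp [ih]

lemma bool_inf'_true {α : Type*} (s : Finset α) (h : s.Nonempty) (f : α → Bool) :
    s.inf' h f = true ↔ ∀ a ∈ s, f a = true := by
  induction h using Finset.Nonempty.cons_induction with
  | singleton a => simp
  | cons a s ha hs ih =>
      rw [Finset.inf'_cons]
      show (f a && s.inf' hs f) = true ↔ _
      simp [ih]

lemma count_ge (k m : ℕ) (hm : m ≤ k) :
    ((univ : Finset (Fin k)).filter (fun p : Fin k => m ≤ (p : ℕ))).card = k - m := by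
  have h1 : ((univ : Finset (Fin k)).filter (fun p : Fin k => m ≤ (p : ℕ))).card
      = (((Finset.range k)).filter (fun p : ℕ => m ≤ p)).card := by
    rw [Finset.card_filter, Finset.card_filter]
    exact Fin.sum_univ_eq_sum_range (fun p => if m ≤ p then 1 else 0) k
  rw [h1]
  have h2 : ((Finset.range k)).filter (fun p : ℕ => m ≤ p) = Finset.Ico m k := by
    ext a; simp [Finset.mem_Ico, and_comm]
  rw [h2, Nat.card_Ico]

lemma pairsum (k : ℕ) (f : Fin k → Bool) :
    (∑ p : Fin k, ∑ q : Fin k, if p < q then (if f p ≠ f q then 1 else 0) else 0)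
      = (univ.filter (fun p => f p = true)).card
        * (k - (univ.filter (fun p => f p = true)).card) := by
  set c := (univ.filter (fun p => f p = true)).card with hc
  set d := (univ.filter (fun p => f p = false)).card with hd
  have hcd : c + d = k := by
    rw [hc, hd]
    have := Finset.card_filter_add_card_filter_not
      (s := (univ : Finset (Fin k))) (p := fun p => f p = true)
    simpa using this
  set A := (∑ p : Fin k, ∑ q : Fin k, if p < q then (if f p ≠ f q then 1 else 0) else 0) with hA
  have hsym : (∑ p : Fin k, ∑ q : Fin k, if q < p then (if f p ≠ f q then 1 else 0) else 0) = A := by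
    rw [hA, Finset.sum_comm]
    refine Finset.sum_congr rfl fun p _ => Finset.sum_congr rfl fun q _ => ?_
    congr 1
    simp [ne_comm]
  have hdouble : A + A = ∑ p : Fin k, ∑ q : Fin k, (if f p ≠ f q then 1 else 0) := by
    nth_rewrite 2 [← hsym]
    rw [hA, ← Finset.sum_add_distrib]
    refine Finset.sum_congr rfl fun p _ => ?_
    rw [← Finset.sum_add_distrib]
    refine Finset.sum_congr rfl fun q _ => ?_
    by_cases h : f p = f q
    · simp [h]
    · have hpq : p ≠ q := fun e => h (by rw [e])
      have hone : (if f p ≠ f q then (1:ℕ) else 0) = 1 := if_pos h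
      rcases lt_trichotomy p q with h1 | h1 | h1
      · rw [if_pos h1, if_neg (asymm h1), hone]
      · exact absurd h1 hpq
      · rw [if_neg (asymm h1), if_pos h1, hone]
  have hD : (∑ p : Fin k, ∑ q : Fin k, (if f p ≠ f q then 1 else 0)) = c * d + d * c := by
    have key : ∀ p q : Fin k, (if f p ≠ f q then (1:ℕ) else 0)
        = (if f p = true then 1 else 0) * (if f q = false then 1 else 0)
          + (if f p = false then 1 else 0) * (if f q = true then 1 else 0) := by
      intro p q; cases hp : f p <;> cases hq : f q <;> simp
    calc (∑ p : Fin k, ∑ q : Fin k, (if f p ≠ f q then 1 else 0))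
        = ∑ p : Fin k, ((if f p = true then 1 else 0) * d + (if f p = false then 1 else 0) * c) := by
          refine Finset.sum_congr rfl fun p _ => ?_
          rw [Finset.sum_congr rfl (fun q _ => key p q), Finset.sum_add_distrib,
            ← Finset.mul_sum, ← Finset.mul_sum]
          congr 1
          · congr 1; rw [hd, Finset.card_filter]
          · congr 1; rw [hc, Finset.card_filter]
      _ = c * d + d * c := by
          rw [Finset.sum_add_distrib, ← Finset.sum_mul, ← Finset.sum_mul,
            ← Finset.card_filter, ← Finset.card_filter, ← hc, ← hd]
  have hdk : d = k - c := by omega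
  have h2 : A + A = c * (k - c) + c * (k - c) := by
    rw [hdouble, hD, hdk, Nat.mul_comm (k - c) c]
  omega

/-- Lemma 6: over a nonempty set `S ⊆ (Fin n → Bool)` closed under pointwise
AND and OR, the sum of pairwise Hamming distances of a `k`-tuple is maximized
by a totally ordered tuple (a chain). -/
theorem exists_chain_maximizing_sum_pairwise_hammingDist
    (n k : ℕ) (hk : 1 ≤ k) (S : Set (Fin n → Bool)) (hne : S.Nonempty)
    (hand : ∀ u ∈ S, ∀ v ∈ S, u ⊓ v ∈ S)
    (hor : ∀ u ∈ S, ∀ v ∈ S, u ⊔ v ∈ S) :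
    ∃ x : Fin k → Fin n → Bool,
      (∀ i : Fin k, x i ∈ S) ∧
      (∀ i j : Fin k, i ≤ j → x i ≤ x j) ∧
      (∀ z : Fin k → Fin n → Bool, (∀ i : Fin k, z i ∈ S) →
        (∑ p : Fin k, ∑ q : Fin k, if p < q then hammingDist (z p) (z q) else 0) ≤
        (∑ p : Fin k, ∑ q : Fin k, if p < q then hammingDist (x p) (x q) else 0)) := by
  classical
  haveI : Nonempty {f : Fin k → Fin n → Bool // ∀ i, f i ∈ S} :=
    ⟨⟨fun _ => hne.choose, fun _ => hne.choose_spec⟩⟩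
  obtain ⟨⟨z0, hz0⟩, hmax⟩ := Finite.exists_max
    (fun f : {f : Fin k → Fin n → Bool // ∀ i, f i ∈ S} =>
      ∑ p : Fin k, ∑ q : Fin k, if p < q then hammingDist (f.1 p) (f.1 q) else 0)
  obtain ⟨c, hc⟩ : ∃ c : Fin n → ℕ,
      ∀ i, c i = ((univ : Finset (Fin k)).filter (fun p => z0 p i = true)).card :=
    ⟨_, fun _ => rfl⟩
  have hck : ∀ i, c i ≤ k := fun i => by
    rw [hc i]
    simpa using Finset.card_filter_le (univ : Finset (Fin k)) (fun p => z0 p i = true)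
  have hBne : ∀ j : Fin k,
      ((univ : Finset (Fin k)).powerset.filter (fun T => T.card = k - (j : ℕ))).Nonempty := by
    intro j
    obtain ⟨T, hTsub, hTcard⟩ := Finset.exists_subset_card_eq (s := (univ : Finset (Fin k))) (n := k - j)
      (by simp)
    exact ⟨T, by simp [Finset.mem_filter, Finset.mem_powerset, hTsub, hTcard]⟩
  have hTne : ∀ j : Fin k, ∀ T ∈ (univ : Finset (Fin k)).powerset.filter
      (fun T => T.card = k - (j : ℕ)), T.Nonempty := by
    intro j T hT
    rw [Finset.mem_filter] at hT
    rw [← Finset.card_pos, hT.2]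
    have := j.isLt
    omega
  set x : Fin k → Fin n → Bool := fun j =>
    (((univ : Finset (Fin k)).powerset.filter (fun T => T.card = k - (j : ℕ))).attach).sup'
      (Finset.attach_nonempty_iff.2 (hBne j))
      (fun T => T.1.inf' (hTne j T.1 T.2) z0) with hxdef
  have hxS : ∀ j, x j ∈ S := fun j =>
    mySup'_mem S hor _ _ _ (fun T _ => myInf'_mem S hand _ _ _ (fun p _ => hz0 p))
  have hchar : ∀ (j : Fin k) (i : Fin n), x j i = true ↔ k - (j : ℕ) ≤ c i := by
    intro j i
    have happ : x j i
        = (((univ : Finset (Fin k)).powerset.filter (fun T => T.card = k - (j : ℕ))).attach).sup'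
          (Finset.attach_nonempty_iff.2 (hBne j))
          (fun T => T.1.inf' (hTne j T.1 T.2) (fun p => z0 p i)) := by
      simp only [hxdef]
      rw [Finset.sup'_apply]
      exact Finset.sup'_congr _ rfl (fun T _ => by rw [Finset.inf'_apply])
    rw [happ, bool_sup'_true]
    constructor
    · rintro ⟨T, -, hT⟩
      rw [bool_inf'_true] at hT
      have hsub : T.1 ⊆ (univ : Finset (Fin k)).filter (fun p => z0 p i = true) :=
        fun p hp => Finset.mem_filter.mpr ⟨Finset.mem_univ p, hT p hp⟩
      have hcard := Finset.card_le_card hsub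
      have hTc : T.1.card = k - (j : ℕ) := (Finset.mem_filter.mp T.2).2
      rw [hTc, ← hc i] at hcard
      exact hcard
    · intro hle
      obtain ⟨T, hTsub, hTcard⟩ := Finset.exists_subset_card_eq
        (s := (univ : Finset (Fin k)).filter (fun p => z0 p i = true)) (n := k - j) (by rw [← hc i]; exact hle)
      have hTmem : T ∈ (univ : Finset (Fin k)).powerset.filter (fun T => T.card = k - (j : ℕ)) := by
        simp only [Finset.mem_filter, Finset.mem_powerset]
        exact ⟨Finset.subset_univ T, hTcard⟩
      refine ⟨⟨T, hTmem⟩, Finset.mem_attach _ _, ?_⟩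
      rw [bool_inf'_true]
      exact fun p hp => (Finset.mem_filter.mp (hTsub hp)).2
  have hchain : ∀ a b : Fin k, a ≤ b → x a ≤ x b := by
    intro a b hab
    intro w
    cases hw : x a w with
    | false => simp [hw]
    | true =>
      have h1 := (hchar a w).1 hw
      have hab' : (a : ℕ) ≤ (b : ℕ) := hab
      have h2 : x b w = true := (hchar b w).2 (by omega)
      simp [h2]
  have hcount : ∀ i : Fin n,
      ((univ : Finset (Fin k)).filter (fun p => x p i = true)).card
      = ((univ : Finset (Fin k)).filter (fun p => z0 p i = true)).card := by
    intro i
    have hfeq : (univ : Finset (Fin k)).filter (fun p => x p i = true)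
        = (univ : Finset (Fin k)).filter (fun p : Fin k => k - c i ≤ (p : ℕ)) := by
      apply Finset.filter_congr
      intro p _
      rw [hchar p i]
      have := p.isLt
      have := hck i
      constructor <;> intro <;> omega
    rw [hfeq, count_ge k (k - c i) (by omega), ← hc i]
    have := hck i
    omega
  have hF : ∀ w : Fin k → Fin n → Bool,
      (∑ p : Fin k, ∑ q : Fin k, if p < q then hammingDist (w p) (w q) else 0)
      = ∑ i : Fin n, ((univ : Finset (Fin k)).filter (fun p => w p i = true)).card
          * (k - ((univ : Finset (Fin k)).filter (fun p => w p i = true)).card) := by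
    intro w
    have step1 : ∀ p q : Fin k, (if p < q then hammingDist (w p) (w q) else 0)
        = ∑ i : Fin n, (if p < q then (if w p i ≠ w q i then 1 else 0) else 0) := by
      intro p q
      by_cases h : p < q
      · simp only [if_pos h]
        rw [hammingDist, Finset.card_filter]
      · simp [h]
    calc (∑ p : Fin k, ∑ q : Fin k, if p < q then hammingDist (w p) (w q) else 0)
        = ∑ p : Fin k, ∑ q : Fin k, ∑ i : Fin n,
            (if p < q then (if w p i ≠ w q i then 1 else 0) else 0) :=
          Finset.sum_congr rfl fun p _ => Finset.sum_congr rfl fun q _ => step1 p q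
      _ = ∑ p : Fin k, ∑ i : Fin n, ∑ q : Fin k,
            (if p < q then (if w p i ≠ w q i then 1 else 0) else 0) :=
          Finset.sum_congr rfl fun p _ => Finset.sum_comm
      _ = ∑ i : Fin n, ∑ p : Fin k, ∑ q : Fin k,
            (if p < q then (if w p i ≠ w q i then 1 else 0) else 0) := Finset.sum_comm
      _ = _ := Finset.sum_congr rfl fun i _ => pairsum k (fun p => w p i)
  refine ⟨x, hxS, hchain, ?_⟩
  intro z hzS
  have h1 := hmax ⟨z, hzS⟩
  simp only at h1
  have h2 : (∑ p : Fin k, ∑ q : Fin k, if p < q then hammingDist (z0 p) (z0 q) else 0)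
      = (∑ p : Fin k, ∑ q : Fin k, if p < q then hammingDist (x p) (x q) else 0) := by
    rw [hF z0, hF x]
    exact Finset.sum_congr rfl fun i _ => by rw [hcount i]
  calc (∑ p : Fin k, ∑ q : Fin k, if p < q then hammingDist (z p) (z q) else 0)
      ≤ (∑ p : Fin k, ∑ q : Fin k, if p < q then hammingDist (z0 p) (z0 q) else 0) := h1
    _ = _ := h2
end

section
/- Let S be a nonempty subset of (Fin n → Bool) that is closed under pointwise Boolean AND and pointwise Boolean OR, and let l, u ∈ S satisfy l ≤ x ≤ u for all x ∈ S (the least and greatest elements of S in the pointwise order). Then for every positive integer k, the maximum of Σ_{1 ≤ i < j ≤ k} hammingDist(x_i, x_j) over all tuples (x₁, …, x_k) ∈ S^k equals ⌊k/2⌋·⌈k/2⌉·hammingDist(l, u); i.e., every tuple has pairwise-distance sum at most this value, and the tuple consisting of ⌊k/2⌋ copies of l and ⌈k/2⌉ copies of u attains it. -/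
lemma aux_mul_le (a b k : ℕ) (h : a + b = k) : a * b ≤ k / 2 * ((k + 1) / 2) := by
  rcases Nat.even_or_odd' k with ⟨m, rfl | rfl⟩
  · have h2 : 2 * m / 2 = m := by omega
    have h3 : (2 * m + 1) / 2 = m := by omega
    rw [h2, h3]
    zify
    have h4 : (a : ℤ) + b = 2 * m := by exact_mod_cast h
    nlinarith [sq_nonneg ((a : ℤ) - b)]
  · have h2 : (2 * m + 1) / 2 = m := by omega
    have h3 : (2 * m + 1 + 1) / 2 = m + 1 := by omega
    rw [h2, h3]
    zify
    have h4 : (a : ℤ) + b = 2 * m + 1 := by exact_mod_cast h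
    rcases (by omega : (a : ℤ) ≥ b + 1 ∨ (b : ℤ) ≥ a + 1) with h5 | h5 <;> nlinarith

lemma sum_ite_const {α : Type*} (s : Finset α) (P : α → Prop) [DecidablePred P] (c : ℕ) :
    (∑ x ∈ s, if P x then c else 0) = (s.filter P).card * c := by
  rw [← Finset.sum_filter, Finset.sum_const, smul_eq_mul]

lemma aux_pairs_le (k : ℕ) (f : Fin k → Bool) :
    (∑ p : Fin k, ∑ q : Fin k, if p < q then (if f p ≠ f q then 1 else 0) else 0)
      ≤ k / 2 * ((k + 1) / 2) := by
  set g : Fin k → Fin k → ℕ :=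
    fun p q => (if f p = true then 1 else 0) * (if f q = false then 1 else 0) with hg
  have hsplit : ∀ p q : Fin k,
      (if p < q then (if f p ≠ f q then (1:ℕ) else 0) else 0)
        = (if p < q then g p q else 0) + (if p < q then g q p else 0) := by
    intro p q
    by_cases hpq : p < q
    · simp only [hpq, if_true, hg]
      cases hp : f p <;> cases hq : f q <;> simp [hp, hq]
    · simp [hpq]
  simp_rw [hsplit]
  simp_rw [Finset.sum_add_distrib]
  have hcomm : (∑ p : Fin k, ∑ q : Fin k, if p < q then g q p else 0)
      = ∑ p : Fin k, ∑ q : Fin k, if q < p then g p q else 0 := by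
    rw [Finset.sum_comm]
  rw [hcomm, ← Finset.sum_add_distrib]
  simp_rw [← Finset.sum_add_distrib]
  have hmerge : ∀ p q : Fin k,
      ((if p < q then g p q else 0) + (if q < p then g p q else 0)) = g p q := by
    intro p q
    rcases lt_trichotomy p q with h | h | h
    · simp [h, asymm h]
    · subst h
      simp only [lt_irrefl, if_false, add_zero, hg]
      cases hp : f p <;> simp [hp]
    · simp [h, asymm h]
  simp_rw [hmerge, hg]
  rw [← Finset.sum_mul_sum]
  apply aux_mul_le
  rw [← Finset.sum_add_distrib]
  have : ∀ p : Fin k, ((if f p = true then (1:ℕ) else 0) + (if f p = false then 1 else 0)) = 1 := by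
    intro p; cases hp : f p <;> simp [hp]
  simp_rw [this]
  simp

lemma card_filter_lt (k m : ℕ) (hm : m ≤ k) :
    (Finset.univ.filter fun p : Fin k => (p : ℕ) < m).card = m := by
  rw [Finset.card_filter]
  rw [Fin.sum_univ_eq_sum_range (fun i => if i < m then (1:ℕ) else 0)]
  rw [Finset.range_eq_Ico, ← Finset.sum_Ico_consecutive _ (Nat.zero_le m) hm]
  have h1 : (∑ i ∈ Finset.Ico 0 m, if i < m then (1:ℕ) else 0) = m := by
    have hc : ∀ i ∈ Finset.Ico 0 m, (if i < m then (1:ℕ) else 0) = 1 := by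
      intro i hi; simp only [Finset.mem_Ico] at hi; simp [hi.2]
    rw [Finset.sum_congr rfl hc, Finset.sum_const, smul_eq_mul, mul_one, Nat.card_Ico, Nat.sub_zero]
  have h2 : (∑ i ∈ Finset.Ico m k, if i < m then (1:ℕ) else 0) = 0 := by
    apply Finset.sum_eq_zero
    intro i hi
    simp only [Finset.mem_Ico] at hi
    simp [Nat.not_lt.mpr hi.1]
  rw [h1, h2]
  omega

/-- For a nonempty `S ⊆ (Fin n → Bool)` closed under pointwise AND and OR with
least element `l` and greatest element `u`, the maximum of the sum of pairwise
Hamming distances over `k`-tuples from `S` is `⌊k/2⌋·⌈k/2⌉·d(l, u)`, attained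
by taking `⌊k/2⌋` copies of `l` and `⌈k/2⌉` copies of `u`. -/
theorem max_sum_pairwise_hammingDist_double_horn
    (n k : ℕ) (hk : 1 ≤ k) (S : Set (Fin n → Bool)) (hne : S.Nonempty)
    (hand : ∀ a ∈ S, ∀ b ∈ S, a ⊓ b ∈ S)
    (hor : ∀ a ∈ S, ∀ b ∈ S, a ⊔ b ∈ S)
    (l u : Fin n → Bool) (hl : l ∈ S) (hu : u ∈ S)
    (hbound : ∀ x ∈ S, l ≤ x ∧ x ≤ u) :
    (∀ z : Fin k → Fin n → Bool, (∀ i : Fin k, z i ∈ S) →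
      (∑ p : Fin k, ∑ q : Fin k, if p < q then hammingDist (z p) (z q) else 0) ≤
        (k / 2) * ((k + 1) / 2) * hammingDist l u) ∧
    (∑ p : Fin k, ∑ q : Fin k,
        if p < q then
          hammingDist ((fun i : Fin k => if (i : ℕ) < k / 2 then l else u) p)
            ((fun i : Fin k => if (i : ℕ) < k / 2 then l else u) q)
        else 0) = (k / 2) * ((k + 1) / 2) * hammingDist l u := by
  constructor
  · -- upper bound
    intro z hz
    have hd : ∀ p q : Fin k, (if p < q then hammingDist (z p) (z q) else 0)
        = ∑ i : Fin n, if p < q then (if z p i ≠ z q i then 1 else 0) else 0 := by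
      intro p q
      by_cases hpq : p < q
      · simp only [hpq, if_true]
        rw [hammingDist, Finset.card_filter]
      · simp [hpq]
    have step1 : (∑ p : Fin k, ∑ q : Fin k, if p < q then hammingDist (z p) (z q) else 0)
        = ∑ i : Fin n, ∑ p : Fin k, ∑ q : Fin k,
            if p < q then (if z p i ≠ z q i then 1 else 0) else 0 := by
      simp_rw [hd]
      rw [Finset.sum_congr rfl fun p _ => Finset.sum_comm, Finset.sum_comm]
    rw [step1]
    have step2 : (k / 2) * ((k + 1) / 2) * hammingDist l u
        = ∑ i : Fin n, if l i ≠ u i then (k / 2) * ((k + 1) / 2) else 0 := by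
      rw [hammingDist, Finset.card_filter, Finset.mul_sum]
      apply Finset.sum_congr rfl
      intro i _
      by_cases h : l i ≠ u i <;> simp [h]
    rw [step2]
    apply Finset.sum_le_sum
    intro i _
    by_cases h : l i = u i
    · have hzeq : ∀ p : Fin k, z p i = u i := by
        intro p
        have h1 := (hbound _ (hz p)).1 i
        have h2 := (hbound _ (hz p)).2 i
        rw [h] at h1
        exact le_antisymm h2 h1
      have hz0 : (∑ p : Fin k, ∑ q : Fin k,
          if p < q then (if z p i ≠ z q i then (1:ℕ) else 0) else 0) = 0 := by
        apply Finset.sum_eq_zero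
        intro p _
        apply Finset.sum_eq_zero
        intro q _
        rw [hzeq p, hzeq q]
        simp
      rw [hz0]
      exact Nat.zero_le _
    · simp only [h, ne_eq, not_false_eq_true, if_pos, ite_true]
      exact aux_pairs_le k (fun p => z p i)
  · -- attained value
    set m := k / 2 with hm
    have hmk : m ≤ k := Nat.div_le_self k 2
    have key : ∀ p q : Fin k,
        (if p < q then
          hammingDist ((fun i : Fin k => if (i : ℕ) < m then l else u) p)
            ((fun i : Fin k => if (i : ℕ) < m then l else u) q)
        else 0)
        = (if (p : ℕ) < m then (if ¬ (q : ℕ) < m then hammingDist l u else 0) else 0) := by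
      intro p q
      by_cases hp : (p : ℕ) < m <;> by_cases hq : (q : ℕ) < m
      · simp [hp, hq, hammingDist_self]
      · have hpq : p < q := by rw [Fin.lt_def]; omega
        simp [hp, hq, hpq]
      · have hpq : ¬ p < q := by rw [Fin.lt_def]; omega
        simp [hp, hq, hpq]
      · simp [hp, hq, hammingDist_self]
    simp_rw [key]
    have c2 : (Finset.univ.filter fun q : Fin k => ¬ (q : ℕ) < m).card = k - m := by
      have := Finset.card_filter_add_card_filter_not
        (s := (Finset.univ : Finset (Fin k))) (p := fun q : Fin k => (q : ℕ) < m)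
      simp only [Finset.card_univ, Fintype.card_fin] at this
      have c1 := card_filter_lt k m hmk
      omega
    have inner : ∀ p : Fin k,
        (∑ q : Fin k, if (p : ℕ) < m then (if ¬ (q : ℕ) < m then hammingDist l u else 0) else 0)
          = if (p : ℕ) < m then (k - m) * hammingDist l u else 0 := by
      intro p
      by_cases hp : (p : ℕ) < m
      · simp only [hp, if_true]
        rw [sum_ite_const Finset.univ (fun q : Fin k => ¬ (q : ℕ) < m), c2]
      · simp [hp]
    simp_rw [inner]
    rw [sum_ite_const Finset.univ (fun p : Fin k => (p : ℕ) < m), card_filter_lt k m hmk]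
    have hkm : k - m = (k + 1) / 2 := by omega
    rw [hkm, mul_assoc]
end
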